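/- SU(1,1)(ℤ) = SL₂(ℤ), and U(1,1)(ℤ) = μ_𝕂 · SL₂(ℤ), where U(1,1)(ℤ) is the group of matrices A ∈ GL₂(𝒪_𝕂) with A·J₀·A* = J₀ for J₀ = [[0,-1],[1,0]], A* the conjugate transpose, and μ_𝕂 the group of roots of unity in 𝕂 viewed as scalar 2×2 matrices. -/

import Mathlib

open scoped Matrix
open Module

section UIPaux
variable {K : Type*} [Field K] [Algebra ℚ K]

lemma UIP_fix_eq_rat (hrank : Module.finrank ℚ K = 2)
    (conj : K ≃ₐ[ℚ] K) (hcne : conj ≠ (AlgEquiv.refl : K ≃ₐ[ℚ] K))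
    {z : K} (hz : conj z = z) : ∃ q : ℚ, z = algebraMap ℚ K q := by
  have hfd : FiniteDimensional ℚ K := Module.finite_of_finrank_pos (by rw [hrank]; norm_num)
  obtain ⟨w, hw⟩ : ∃ w : K, conj w ≠ w := by
    by_contra h
    push_neg at h
    exact hcne (AlgEquiv.ext fun x => h x)
  have hwrat : ∀ q : ℚ, w ≠ algebraMap ℚ K q := by
    intro q hq
    exact hw (by rw [hq, AlgEquiv.commutes])
  have li : LinearIndependent ℚ ![(1:K), w] := by
    rw [LinearIndependent.pair_iff]
    intro s t hst
    rw [Algebra.smul_def, Algebra.smul_def, mul_one] at hst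
    by_cases ht : t = 0
    · subst ht
      simp only [map_zero, zero_mul, add_zero] at hst
      exact ⟨(algebraMap ℚ K).injective (by simpa using hst), rfl⟩
    · exfalso
      apply hwrat (-s/t)
      have htK : algebraMap ℚ K t ≠ 0 := by
        simpa using (algebraMap ℚ K).injective.ne ht
      rw [map_div₀, map_neg, eq_div_iff htK]
      linear_combination hst
  have hspan : Submodule.span ℚ {(1:K), w} = ⊤ := by
    have h1 : Set.range ![(1:K), w] = {(1:K), w} := by
      ext x
      simp [Matrix.range_cons, Matrix.range_empty]
      tauto
    apply Submodule.eq_top_of_finrank_eq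
    rw [← h1, finrank_span_eq_card li, hrank]
    simp
  have hz2 : z ∈ Submodule.span ℚ {(1:K), w} := hspan ▸ Submodule.mem_top
  rw [Submodule.mem_span_pair] at hz2
  obtain ⟨p, q, hpq⟩ := hz2
  have hconj : p • (1:K) + q • conj w = z := by
    have := congrArg conj hpq
    simpa only [map_add, map_smul, map_one, hz] using this
  have hqq : q • conj w = q • w := by
    have := hconj.trans hpq.symm
    linear_combination this
  by_cases hq : q = 0
  · exact ⟨p, by rw [← hpq, hq, zero_smul, add_zero, Algebra.smul_def, mul_one]⟩
  · exact absurd (smul_right_injective K hq hqq) hw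


lemma UIP_conj_integral (conj : K ≃ₐ[ℚ] K) {x : K} (hx : IsIntegral ℤ x) :
    IsIntegral ℤ (conj x) :=
  IsIntegral.map ((conj.toAlgHom.restrictScalars ℤ)) hx

lemma UIP_int_of_rat_int {q : ℚ} (h : IsIntegral ℤ (algebraMap ℚ K q)) : ∃ n : ℤ, q = n := by
  rw [isIntegral_algebraMap_iff (algebraMap ℚ K).injective] at h
  obtain ⟨n, hn⟩ := IsIntegrallyClosed.isIntegral_iff.mp h
  exact ⟨n, hn.symm⟩


lemma UIP_clear_den (q : ℚ) (D : ℕ) (h : q.den ∣ D) : ∃ m : ℤ, (m:ℚ) = q * D := by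
  obtain ⟨kk, hk⟩ := h
  refine ⟨q.num * kk, ?_⟩
  rw [hk]
  push_cast
  rw [← mul_assoc, Rat.mul_den_eq_num]

lemma UIP_root12 (hrank : Module.finrank ℚ K = 2)
    (conj : K ≃ₐ[ℚ] K) (hci : ∀ x : K, conj (conj x) = x)
    (hcne : conj ≠ (AlgEquiv.refl : K ≃ₐ[ℚ] K))
    (hpos : ∀ x : K, ∃ qn : ℚ, x * conj x = algebraMap ℚ K qn ∧ (x ≠ 0 → 0 < qn))
    {ξ : K} (hint : IsIntegral ℤ ξ) (hnorm : ξ * conj ξ = 1) : ξ ^ 12 = 1 := by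
  have htfix : conj (ξ + conj ξ) = ξ + conj ξ := by rw [map_add, hci, add_comm]
  obtain ⟨q, hq⟩ := UIP_fix_eq_rat hrank conj hcne htfix
  have htint : IsIntegral ℤ (algebraMap ℚ K q) := hq ▸ hint.add (UIP_conj_integral conj hint)
  obtain ⟨n, hn⟩ := UIP_int_of_rat_int htint
  have hc : algebraMap ℚ K q = ((n : ℤ) : K) := by rw [hn]; exact map_intCast (algebraMap ℚ K) n
  have ht : ξ + conj ξ = ((n : ℤ) : K) := by rw [hq, hc]
  have key : ξ ^ 2 = ((n : ℤ) : K) * ξ - 1 := by linear_combination ξ * ht - hnorm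
  by_cases hfix : conj ξ = ξ
  · rw [hfix] at hnorm
    have h2 : ξ ^ 2 = 1 := by rw [sq]; exact hnorm
    calc ξ ^ 12 = (ξ ^ 2) ^ 6 := by ring
      _ = 1 := by rw [h2]; norm_num
  · have hwne : ξ - conj ξ ≠ 0 := sub_ne_zero.mpr fun h => hfix h.symm
    obtain ⟨qw, hqw, hqwpos⟩ := hpos (ξ - conj ξ)
    have hcw : conj (ξ - conj ξ) = conj ξ - ξ := by rw [map_sub, hci]
    have hw2 : (ξ - conj ξ) * conj (ξ - conj ξ) = algebraMap ℚ K (4 - q ^ 2) := by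
      rw [hcw]
      have h4 : algebraMap ℚ K (4 - q ^ 2) = 4 - ((n:ℤ):K) ^ 2 := by
        rw [map_sub, map_pow, hc]; norm_num
      rw [h4]
      linear_combination (3 * ξ - conj ξ - ((n:ℤ):K)) * ht - 4 * key
    have hq4 : qw = 4 - q ^ 2 := (algebraMap ℚ K).injective (by rw [← hqw, hw2])
    have hqlt : (n : ℚ) ^ 2 < 4 := by
      have h0 : 0 < 4 - q ^ 2 := hq4 ▸ hqwpos hwne
      rw [← hn]
      linarith
    have hn2 : n ^ 2 < 4 := by exact_mod_cast hqlt
    have hlb : -2 < n := by nlinarith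
    have hub : n < 2 := by nlinarith
    interval_cases n
    · -- n = -1 : ξ³ = 1
      have h3 : ξ ^ 3 = 1 := by
        push_cast at key
        linear_combination (ξ - 1) * key
      calc ξ ^ 12 = (ξ ^ 3) ^ 4 := by ring
        _ = 1 := by rw [h3]; norm_num
    · -- n = 0 : ξ² = -1
      have h2 : ξ ^ 2 = -1 := by push_cast at key; linear_combination key
      calc ξ ^ 12 = ((ξ ^ 2) ^ 2) ^ 3 := by ring
        _ = 1 := by rw [h2]; norm_num
    · -- n = 1 : ξ³ = -1
      have h3 : ξ ^ 3 = -1 := by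
        push_cast at key
        linear_combination (ξ + 1) * key
      calc ξ ^ 12 = ((ξ ^ 3) ^ 2) ^ 2 := by ring
        _ = 1 := by rw [h3]; norm_num


lemma UIP_main_fwd (hrank : Module.finrank ℚ K = 2)
    (conj : K ≃ₐ[ℚ] K) (hci : ∀ x : K, conj (conj x) = x)
    (hcne : conj ≠ (AlgEquiv.refl : K ≃ₐ[ℚ] K))
    (hpos : ∀ x : K, ∃ qn : ℚ, x * conj x = algebraMap ℚ K qn ∧ (x ≠ 0 → 0 < qn))
    (A : Matrix (Fin 2) (Fin 2) K)
    (hAint : ∀ i j, A i j ∈ integralClosure ℤ K)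
    (hdet : ∃ u ∈ integralClosure ℤ K, A.det * u = 1)
    (hU : A * !![(0 : K), -1; 1, 0] * (A.map conj)ᵀ = !![(0 : K), -1; 1, 0]) :
    ∃ (ξ : K) (B : Matrix (Fin 2) (Fin 2) K), ξ ^ 12 = 1 ∧
      (∀ i j, ∃ m : ℤ, B i j = (m : K)) ∧ B.det = 1 ∧ A = ξ • B := by
  have e1 := congrFun (congrFun hU 0) 0
  have e2 := congrFun (congrFun hU 0) 1
  have e3 := congrFun (congrFun hU 1) 0
  have e4 := congrFun (congrFun hU 1) 1
  simp [Matrix.mul_apply, Fin.sum_univ_two, Matrix.transpose_apply, Matrix.map_apply] at e1 e2 e3 e4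
  have hdetab : A.det = A 0 0 * A 1 1 - A 0 1 * A 1 0 := by rw [Matrix.det_fin_two]
  have hdne : A.det ≠ 0 := by
    obtain ⟨u, _, hu⟩ := hdet
    intro h0; rw [h0, zero_mul] at hu; exact one_ne_zero hu.symm
  have sca : conj (A 0 0) * A.det = A 0 0 := by
    rw [hdetab]; linear_combination A 0 0 * e3 - A 1 0 * e1
  have scb : conj (A 0 1) * A.det = A 0 1 := by
    rw [hdetab]; linear_combination A 0 1 * e3 - A 1 1 * e1
  have scc : conj (A 1 0) * A.det = A 1 0 := by
    rw [hdetab]; linear_combination A 0 0 * e4 - A 1 0 * e2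
  have scd : conj (A 1 1) * A.det = A 1 1 := by
    rw [hdetab]; linear_combination A 0 1 * e4 - A 1 1 * e2
  have sc : ∀ i j, conj (A i j) * A.det = A i j := by
    intro i j; fin_cases i <;> fin_cases j <;> first | exact sca | exact scb | exact scc | exact scd
  have hpair : ∀ i j i' j', conj (A i j) * A i' j' = A i j * conj (A i' j') := by
    intro i j i' j'
    apply mul_left_cancel₀ hdne
    calc A.det * (conj (A i j) * A i' j')
        = (conj (A i j) * A.det) * A i' j' := by ring
      _ = A i j * (conj (A i' j') * A.det) := by rw [sc i j, sc i' j']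
      _ = A.det * (A i j * conj (A i' j')) := by ring
  have hnz : ∃ i0 j0, A i0 j0 ≠ 0 := by
    by_contra h
    push_neg at h
    apply hdne
    rw [hdetab, h 0 0, h 0 1]
    ring
  obtain ⟨i0, j0, hξ0⟩ := hnz
  obtain ⟨qN, hqN, hqNpos⟩ := hpos (A i0 j0)
  have hqN0 : 0 < qN := hqNpos hξ0
  have hcξ0 : conj (A i0 j0) ≠ 0 := by
    intro h
    apply hξ0
    have := congrArg conj h
    rw [hci] at this
    simpa using this
  have hr : ∀ i j, ∃ s : ℚ, A i j = algebraMap ℚ K s * A i0 j0 := by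
    intro i j
    have hfix : conj (A i j * conj (A i0 j0)) = A i j * conj (A i0 j0) := by
      rw [map_mul, hci]; exact hpair i j i0 j0
    obtain ⟨s, hs⟩ := UIP_fix_eq_rat hrank conj hcne hfix
    refine ⟨s / qN, ?_⟩
    apply mul_right_cancel₀ hcξ0
    rw [hs, mul_assoc, hqN, ← map_mul]
    congr 1
    field_simp
  choose r hrr using hr
  -- clear denominators
  set Dn : ℕ := (r 0 0).den * (r 0 1).den * ((r 1 0).den * (r 1 1).den) with hDn
  have hDpos : 0 < Dn := by positivity
  have hm : ∀ i j, ∃ m : ℤ, (m:ℚ) = r i j * Dn := by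
    intro i j
    apply UIP_clear_den
    fin_cases i <;> fin_cases j
    · exact Dvd.dvd.mul_right (Dvd.dvd.mul_right dvd_rfl _) _
    · exact Dvd.dvd.mul_right (Dvd.dvd.mul_left dvd_rfl _) _
    · exact Dvd.dvd.mul_left (Dvd.dvd.mul_right dvd_rfl _) _
    · exact Dvd.dvd.mul_left (Dvd.dvd.mul_left dvd_rfl _) _
  choose m hmm using hm
  -- r i0 j0 = 1
  have hr1 : r i0 j0 = 1 := by
    have := hrr i0 j0
    have h2 : (algebraMap ℚ K (r i0 j0) - 1) * A i0 j0 = 0 := by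
      rw [sub_mul, one_mul, ← this]; ring
    rcases mul_eq_zero.mp h2 with h3 | h3
    · have h4 : algebraMap ℚ K (r i0 j0) = algebraMap ℚ K 1 := by
        rw [map_one]; exact sub_eq_zero.mp h3
      exact (algebraMap ℚ K).injective h4
    · exact absurd h3 hξ0
  -- m i0 j0 is nonzero
  have hm0 : m i0 j0 ≠ 0 := by
    intro h0
    have := hmm i0 j0
    rw [h0, hr1, one_mul] at this
    have : (Dn:ℚ) = 0 := by exact_mod_cast this.symm
    have : Dn = 0 := by exact_mod_cast this
    omega
  -- gcd
  set g : ℕ := Nat.gcd (Int.gcd (m 0 0) (m 0 1)) (Int.gcd (m 1 0) (m 1 1)) with hg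
  have hgdvd : ∀ i j, (g:ℤ) ∣ m i j := by
    intro i j
    have hg1 : (g:ℤ) ∣ (Int.gcd (m 0 0) (m 0 1) : ℤ) :=
      Int.natCast_dvd_natCast.mpr (Nat.gcd_dvd_left _ _)
    have hg2 : (g:ℤ) ∣ (Int.gcd (m 1 0) (m 1 1) : ℤ) :=
      Int.natCast_dvd_natCast.mpr (Nat.gcd_dvd_right _ _)
    fin_cases i <;> fin_cases j
    · exact hg1.trans (Int.gcd_dvd_left _ _)
    · exact hg1.trans (Int.gcd_dvd_right _ _)
    · exact hg2.trans (Int.gcd_dvd_left _ _)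
    · exact hg2.trans (Int.gcd_dvd_right _ _)
  have hgne : (g:ℤ) ≠ 0 := by
    intro h0
    exact hm0 (by simpa [h0] using (h0 ▸ hgdvd i0 j0 : (0:ℤ) ∣ m i0 j0))
  -- Bezout
  obtain ⟨c1, c2, c3, c4, hbez⟩ :
      ∃ c1 c2 c3 c4 : ℤ, (g:ℤ) = c1 * m 0 0 + c2 * m 0 1 + c3 * m 1 0 + c4 * m 1 1 := by
    have hG1 := Int.gcd_eq_gcd_ab (m 0 0) (m 0 1)
    have hG2 := Int.gcd_eq_gcd_ab (m 1 0) (m 1 1)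
    set G1 : ℤ := (Int.gcd (m 0 0) (m 0 1) : ℤ) with hG1def
    set G2 : ℤ := (Int.gcd (m 1 0) (m 1 1) : ℤ) with hG2def
    have hg' : (g:ℤ) = G1 * G1.gcdA G2 + G2 * G1.gcdB G2 := by
      have h := Int.gcd_eq_gcd_ab G1 G2
      rw [← h, hg, hG1def, hG2def, Int.gcd_natCast_natCast]
    exact ⟨(m 0 0).gcdA (m 0 1) * G1.gcdA G2, (m 0 0).gcdB (m 0 1) * G1.gcdA G2,
      (m 1 0).gcdA (m 1 1) * G1.gcdB G2, (m 1 0).gcdB (m 1 1) * G1.gcdB G2,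
      by rw [hg', hG1, hG2]; ring⟩
  -- divide by g
  set k : Fin 2 → Fin 2 → ℤ := fun i j => m i j / g with hkdef
  have hk : ∀ i j, (g:ℤ) * k i j = m i j := fun i j => Int.mul_ediv_cancel' (hgdvd i j)
  have hbez2 : c1 * k 0 0 + c2 * k 0 1 + c3 * k 1 0 + c4 * k 1 1 = 1 := by
    apply mul_left_cancel₀ hgne
    rw [mul_one]
    calc (g:ℤ) * (c1 * k 0 0 + c2 * k 0 1 + c3 * k 1 0 + c4 * k 1 1)
        = c1 * ((g:ℤ) * k 0 0) + c2 * ((g:ℤ) * k 0 1) + c3 * ((g:ℤ) * k 1 0)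
          + c4 * ((g:ℤ) * k 1 1) := by ring
      _ = (g:ℤ) := by rw [hk 0 0, hk 0 1, hk 1 0, hk 1 1, hbez]
  -- define ξ and B
  set ξ : K := algebraMap ℚ K ((g:ℚ)/(Dn:ℚ)) * A i0 j0 with hξdef
  set B : Matrix (Fin 2) (Fin 2) K := Matrix.of (fun i j => ((k i j : ℤ) : K)) with hBdef
  have hBe : ∀ i j, B i j = ((k i j : ℤ) : K) := fun i j => rfl
  have hDQ : (Dn:ℚ) ≠ 0 := by positivity
  have hgQ : (g:ℚ) ≠ 0 := by exact_mod_cast hgne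
  have hAB : ∀ i j, A i j = ξ * B i j := by
    intro i j
    rw [hrr i j, hBe i j, hξdef]
    have hcast : ((k i j : ℤ) : K) = algebraMap ℚ K ((k i j : ℤ) : ℚ) :=
      (map_intCast (algebraMap ℚ K) (k i j)).symm
    rw [hcast]
    rw [show algebraMap ℚ K ((g:ℚ)/(Dn:ℚ)) * A i0 j0 * algebraMap ℚ K ((k i j : ℤ) : ℚ)
        = algebraMap ℚ K ((g:ℚ)/(Dn:ℚ) * ((k i j : ℤ) : ℚ)) * A i0 j0 by rw [map_mul]; ring]
    congr 2
    have hmq : ((m i j : ℤ) : ℚ) = r i j * Dn := hmm i j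
    have hgk : ((g:ℚ)) * ((k i j : ℤ) : ℚ) = ((m i j : ℤ) : ℚ) := by exact_mod_cast hk i j
    field_simp
    linear_combination hmq.symm - hgk
  have hAsmul : A = ξ • B := by
    ext i j
    rw [Matrix.smul_apply, smul_eq_mul]
    exact hAB i j
  -- ξ is integral
  have hintcast : ∀ z : ℤ, IsIntegral ℤ ((z:K)) := by
    intro z
    have : ((z:K)) = algebraMap ℤ K z := by simp
    rw [this]
    exact isIntegral_algebraMap
  have hsumK : (c1:K) * B 0 0 + (c2:K) * B 0 1 + (c3:K) * B 1 0 + (c4:K) * B 1 1 = 1 := by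
    rw [hBe, hBe, hBe, hBe]
    exact_mod_cast congrArg (fun z : ℤ => (z : K)) hbez2
  have hξeq : ξ = (c1:K) * A 0 0 + (c2:K) * A 0 1 + (c3:K) * A 1 0 + (c4:K) * A 1 1 := by
    rw [hAB 0 0, hAB 0 1, hAB 1 0, hAB 1 1]
    linear_combination (-ξ) * hsumK
  have hξint : IsIntegral ℤ ξ := by
    rw [hξeq]
    exact ((((hintcast c1).mul (hAint 0 0)).add ((hintcast c2).mul (hAint 0 1))).add
      ((hintcast c3).mul (hAint 1 0))).add ((hintcast c4).mul (hAint 1 1))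
  have hξne : ξ ≠ 0 := by
    intro h0
    apply hξ0
    rw [hAB i0 j0, h0, zero_mul]
  -- conj fixes B entries
  have hconjB : ∀ i j, conj (B i j) = B i j := by
    intro i j
    rw [hBe i j]
    exact map_intCast conj (k i j)
  have hsub : ∀ i j, conj (A i j) = conj ξ * B i j := by
    intro i j
    rw [hAB i j, map_mul, hconjB]
  -- the norm equation
  set dB : ℤ := k 0 0 * k 1 1 - k 0 1 * k 1 0 with hdBdef
  have hX : ξ * conj ξ * ((dB:ℤ):K) = 1 := by
    have hexp : ξ * conj ξ * ((dB:ℤ):K)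
        = A 0 0 * conj (A 1 1) - A 0 1 * conj (A 1 0) := by
      rw [hAB 0 0, hAB 0 1, hsub 1 1, hsub 1 0, hdBdef, hBe 0 0, hBe 0 1, hBe 1 0, hBe 1 1]
      push_cast
      ring
    rw [hexp]
    linear_combination -e2
  obtain ⟨qx, hqx, hqxpos⟩ := hpos ξ
  have hqx0 : 0 < qx := hqxpos hξne
  have hqxint : IsIntegral ℤ (algebraMap ℚ K qx) := by
    rw [← hqx]
    exact hξint.mul (UIP_conj_integral conj hξint)
  obtain ⟨N, hN⟩ := UIP_int_of_rat_int hqxint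
  have hqdB : qx * ((dB:ℤ):ℚ) = 1 := by
    apply (algebraMap ℚ K).injective
    rw [map_mul, map_one, ← hqx]
    have : algebraMap ℚ K ((dB:ℤ):ℚ) = ((dB:ℤ):K) := map_intCast (algebraMap ℚ K) dB
    rw [this]
    exact hX
  have hNdB : N * dB = 1 := by
    have : ((N * dB : ℤ) : ℚ) = 1 := by push_cast; rw [← hN]; exact hqdB
    exact_mod_cast this
  have hN0 : 0 < N := by
    have : (0:ℚ) < (N:ℚ) := hN ▸ hqx0
    exact_mod_cast this
  have hdB1 : dB = 1 := by
    rcases Int.mul_eq_one_iff_eq_one_or_neg_one.mp hNdB with ⟨h1, h2⟩ | ⟨h1, h2⟩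
    · exact h2
    · omega
  have hN1 : N = 1 := by rw [hdB1, mul_one] at hNdB; exact hNdB
  have hq1 : qx = 1 := by rw [hN, hN1]; norm_num
  have hnorm : ξ * conj ξ = 1 := by rw [hqx, hq1, map_one]
  have hdetB : B.det = 1 := by
    rw [Matrix.det_fin_two, hBe 0 0, hBe 0 1, hBe 1 0, hBe 1 1]
    have : ((dB:ℤ):K) = 1 := by rw [hdB1]; norm_num
    rw [hdBdef] at this
    push_cast at this ⊢
    linear_combination this
  exact ⟨ξ, B, UIP_root12 hrank conj hci hcne hpos hξint hnorm,
    fun i j => ⟨k i j, hBe i j⟩, hdetB, hAsmul⟩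

end UIPaux

/-- Let `𝕂` be an imaginary quadratic field (an abstract field `K` of degree 2
over `ℚ` with nontrivial conjugation `conj` whose norm form `x·conj x` is a
positive-definite rational form), with ring of integers `𝒪_𝕂 = integralClosure ℤ K`.
Let `J₀ = [[0,-1],[1,0]]` and let `U(1,1)(ℤ)` consist of the `A ∈ GL₂(𝒪_𝕂)` with
`A·J₀·A* = J₀` (`A*` the conjugate transpose).  Then
`SU(1,1)(ℤ) = SL₂(ℤ)` and `U(1,1)(ℤ) = μ_𝕂 · SL₂(ℤ)`, with `μ_𝕂` the group of
roots of unity of `𝕂` viewed as scalar matrices. -/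
theorem unitary_group_integral_points
    (K : Type*) [Field K] [Algebra ℚ K]
    (hrank : Module.finrank ℚ K = 2)
    (conj : K ≃ₐ[ℚ] K) (hci : ∀ x : K, conj (conj x) = x)
    (hcne : conj ≠ (AlgEquiv.refl : K ≃ₐ[ℚ] K))
    (hpos : ∀ x : K, ∃ qn : ℚ, x * conj x = algebraMap ℚ K qn ∧ (x ≠ 0 → 0 < qn)) :
    (∀ A : Matrix (Fin 2) (Fin 2) K,
      ((∀ i j, A i j ∈ integralClosure ℤ K) ∧
        A * !![(0 : K), -1; 1, 0] * (A.map conj)ᵀ = !![(0 : K), -1; 1, 0] ∧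
        A.det = 1) ↔
      ((∀ i j, ∃ n : ℤ, A i j = (n : K)) ∧ A.det = 1)) ∧
    (∀ A : Matrix (Fin 2) (Fin 2) K,
      ((∀ i j, A i j ∈ integralClosure ℤ K) ∧
        (∃ u ∈ integralClosure ℤ K, A.det * u = 1) ∧
        A * !![(0 : K), -1; 1, 0] * (A.map conj)ᵀ = !![(0 : K), -1; 1, 0]) ↔
      (∃ (ξ : K) (B : Matrix (Fin 2) (Fin 2) K),
        (∃ n : ℕ, 0 < n ∧ ξ ^ n = 1) ∧
        (∀ i j, ∃ m : ℤ, B i j = (m : K)) ∧ B.det = 1 ∧ A = ξ • B)) := by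
  have hintcast : ∀ z : ℤ, IsIntegral ℤ ((z:K)) := by
    intro z
    have : ((z:K)) = algebraMap ℤ K z := by simp
    rw [this]
    exact isIntegral_algebraMap
  -- integer SL2 matrices satisfy the unitary relation
  have hSL : ∀ A : Matrix (Fin 2) (Fin 2) K, (∀ i j, ∃ n : ℤ, A i j = (n : K)) → A.det = 1 →
      A * !![(0 : K), -1; 1, 0] * (A.map conj)ᵀ = !![(0 : K), -1; 1, 0] := by
    intro A hent hdet1
    have hmap : A.map conj = A := by
      ext i j
      obtain ⟨n, hn⟩ := hent i j
      rw [Matrix.map_apply, hn]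
      exact map_intCast conj n
    rw [hmap]
    have hd : A 0 0 * A 1 1 - A 0 1 * A 1 0 = 1 := by
      rw [Matrix.det_fin_two] at hdet1; linear_combination hdet1
    rw [Matrix.eta_fin_two A]
    ext i j
    fin_cases i <;> fin_cases j <;>
      simp [Matrix.mul_apply, Fin.sum_univ_two, Matrix.transpose_apply,
        Matrix.cons_transpose, Matrix.vecHead, Matrix.vecTail]
    · ring
    · linear_combination -hd
    · linear_combination hd
    · ring
  constructor
  · -- SU(1,1)(ℤ) = SL₂(ℤ)
    intro A
    constructor
    · rintro ⟨hAint, hU, hdet1⟩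
      refine ⟨?_, hdet1⟩
      obtain ⟨ξ, B, h12, hBint, hdetB, hAsmul⟩ :=
        UIP_main_fwd hrank conj hci hcne hpos A hAint
          ⟨1, one_mem _, by rw [hdet1, mul_one]⟩ hU
      have hdetA : A.det = ξ ^ 2 := by
        rw [hAsmul, Matrix.det_smul, hdetB]
        simp
      have hξ2 : ξ ^ 2 = 1 := by rw [← hdetA, hdet1]
      have hfac : (ξ - 1) * (ξ + 1) = 0 := by linear_combination hξ2
      have hAe : ∀ i j, A i j = ξ * B i j := by
        intro i j; rw [hAsmul]; simp [Matrix.smul_apply]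
      intro i j
      obtain ⟨mm, hmm⟩ := hBint i j
      rcases mul_eq_zero.mp hfac with h | h
      · have hξ1 : ξ = 1 := sub_eq_zero.mp h
        exact ⟨mm, by rw [hAe i j, hξ1, one_mul, hmm]⟩
      · have hξ1 : ξ = -1 := by linear_combination h
        refine ⟨-mm, ?_⟩
        rw [hAe i j, hξ1, hmm]
        push_cast
        ring
    · rintro ⟨hent, hdet1⟩
      refine ⟨?_, hSL A hent hdet1, hdet1⟩
      intro i j
      obtain ⟨n, hn⟩ := hent i j
      rw [hn]
      exact hintcast n
  · -- U(1,1)(ℤ) = μ ⋅ SL₂(ℤ)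
    intro A
    constructor
    · rintro ⟨hAint, hdet, hU⟩
      obtain ⟨ξ, B, h12, hBint, hdetB, hAsmul⟩ :=
        UIP_main_fwd hrank conj hci hcne hpos A hAint hdet hU
      exact ⟨ξ, B, ⟨12, by norm_num, h12⟩, hBint, hdetB, hAsmul⟩
    · rintro ⟨ξ, B, ⟨n, hn0, hξn⟩, hBint, hdetB, hAeq⟩
      have hξne : ξ ≠ 0 := by
        intro h0
        rw [h0, zero_pow (by omega : n ≠ 0)] at hξn
        exact zero_ne_one hξn
      have hξint : IsIntegral ℤ ξ := by
        refine ⟨Polynomial.X ^ n - Polynomial.C 1, Polynomial.monic_X_pow_sub_C 1 (by omega), ?_⟩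
        simp [hξn]
      have hAe : ∀ i j, A i j = ξ * B i j := by
        intro i j; rw [hAeq]; simp [Matrix.smul_apply]
      have hcB : ∀ i j, conj (B i j) = B i j := by
        intro i j
        obtain ⟨mm, hmm⟩ := hBint i j
        rw [hmm]
        exact map_intCast conj mm
      have hcA : ∀ i j, conj (A i j) = conj ξ * B i j := by
        intro i j
        rw [hAe i j, map_mul, hcB]
      -- norm of ξ is 1
      have hnorm : ξ * conj ξ = 1 := by
        obtain ⟨qx, hqx, hqxpos⟩ := hpos ξ
        have hq0 : 0 < qx := hqxpos hξne
        have hcξn : conj ξ ^ n = 1 := by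
          rw [← map_pow, hξn, map_one]
        have hqn : algebraMap ℚ K (qx ^ n) = 1 := by
          rw [map_pow, ← hqx, mul_pow, hξn, hcξn, one_mul]
        have hqn1 : qx ^ n = 1 := by
          apply (algebraMap ℚ K).injective
          rw [hqn, map_one]
        have hqx1 : qx = 1 := by
          rcases lt_trichotomy qx 1 with h | h | h
          · exfalso
            have := pow_lt_one₀ (le_of_lt hq0) h hn0.ne'
            rw [hqn1] at this
            exact lt_irrefl 1 this
          · exact h
          · exfalso
            have := one_lt_pow₀ h hn0.ne'
            rw [hqn1] at this
            exact lt_irrefl 1 this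
        rw [hqx, hqx1, map_one]
      constructor
      · -- integral entries
        intro i j
        obtain ⟨mm, hmm⟩ := hBint i j
        rw [hAe i j, hmm]
        exact hξint.mul (hintcast mm)
      constructor
      · -- det is a unit
        refine ⟨ξ ^ (2 * n - 2), hξint.pow _, ?_⟩
        have hdetA : A.det = ξ ^ 2 := by
          rw [hAeq, Matrix.det_smul, hdetB]
          simp
        rw [hdetA, ← pow_add]
        have h2n : 2 + (2 * n - 2) = 2 * n := by omega
        rw [h2n, mul_comm 2 n, pow_mul, hξn, one_pow]
      · -- unitary relation
        have hmapB : B.map conj = B := by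
          ext i j
          rw [Matrix.map_apply]
          exact hcB i j
        have hBJ : B * !![(0 : K), -1; 1, 0] * Bᵀ = !![(0 : K), -1; 1, 0] := by
          have h := hSL B hBint hdetB
          rwa [hmapB] at h
        have hmapA : (ξ • B).map conj = conj ξ • B := by
          ext i j
          simp [Matrix.map_apply, Matrix.smul_apply, smul_eq_mul, map_mul, hcB i j]
        rw [hAeq, hmapA, Matrix.transpose_smul, Matrix.mul_smul, Matrix.smul_mul,
          Matrix.smul_mul, smul_smul, mul_comm (conj ξ) ξ, hnorm, one_smul, hBJ]
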